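/- Let E be a finite directed graph without sinks in which every loop has an exit, let k ≥ 1, and let σ be a permutation of E^k preserving sources and ranges, with associated partial maps f_{e,g} on Ψ as above. Then the following are equivalent: (i) [Condition (d)] there exists m ≥ 1 such that for all pairs (e_1, g_1), …, (e_m, g_m) ∈ E¹ × E¹ the composition f_{e_1,g_1} ∘ ⋯ ∘ f_{e_m,g_m} has empty domain; (ii) there exists a partial order ≤ on Ψ such that (a) the minimal elements of ≤ are exactly the elements of Ψ ∖ Δ, and (b) f_{e,g}(α, β) < (α, β) (strict inequality) for all e, g ∈ E¹ and all (α, β) ∈ D(f_{e,g}). -/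

import Mathlib

structure FinDirGraph where
  V : Type
  E : Type
  [instFV : Fintype V]
  [instFE : Fintype E]
  [instDV : DecidableEq V]
  [instDE : DecidableEq E]
  r : E → V
  s : E → V

attribute [instance] FinDirGraph.instFV FinDirGraph.instFE FinDirGraph.instDV FinDirGraph.instDE

namespace FinDirGraph

variable (G : FinDirGraph)

def IsPathFrom : G.V → List G.E → Prop
  | _, [] => True
  | v, e :: l => G.s e = v ∧ IsPathFrom (G.r e) l

def rangeFrom : G.V → List G.E → G.V
  | v, [] => v
  | _, e :: l => rangeFrom (G.r e) l

structure Path where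
  src : G.V
  edges : List G.E
  ok : G.IsPathFrom src edges

variable {G}

def Path.len (μ : G.Path) : ℕ := μ.edges.length

def Path.rng (μ : G.Path) : G.V := G.rangeFrom μ.src μ.edges

variable (G)

def NoSinks : Prop := ∀ v : G.V, ∃ e : G.E, G.s e = v

def NoSources : Prop := ∀ v : G.V, ∃ e : G.E, G.r e = v

def EveryLoopHasExit : Prop :=
  ∀ μ : G.Path, μ.edges ≠ [] → μ.src = μ.rng →
    ∃ e ∈ μ.edges, ∃ f g : G.E, f ≠ g ∧ G.s f = G.s e ∧ G.s g = G.s e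

variable {G}

/-- Prepending an edge to a path. -/
def Path.cons (e : G.E) (μ : G.Path) (h : μ.src = G.r e) : G.Path :=
  ⟨G.s e, e :: μ.edges, ⟨rfl, h ▸ μ.ok⟩⟩

lemma isPathFrom_snoc : ∀ (l : List G.E) (v : G.V) (g : G.E),
    G.IsPathFrom v l → G.s g = G.rangeFrom v l → G.IsPathFrom v (l ++ [g])
  | [], _, _, _, h => ⟨h, trivial⟩
  | e :: t, _, g, hp, h => ⟨hp.1, isPathFrom_snoc t (G.r e) g hp.2 h⟩

/-- Appending an edge to a path. -/
def Path.snoc (μ : G.Path) (g : G.E) (h : G.s g = μ.rng) : G.Path :=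
  ⟨μ.src, μ.edges ++ [g], isPathFrom_snoc μ.edges μ.src g μ.ok h⟩

variable (G)

/-- The set `E^k` of paths of length `k`, as a type. -/
def PathOfLen (k : ℕ) := {μ : G.Path // μ.len = k}

variable {G}

lemma len_cons_eq {k : ℕ} (hk : 1 ≤ k) {e : G.E} {α : G.Path}
    (hlen : α.len = k - 1) (hsrc : α.src = G.r e) : (Path.cons e α hsrc).len = k := by
  simp only [Path.len, Path.cons, List.length_cons] at *
  omega

/-- The relational graph of the map `f_e : E^{k-1}_{*,r(e)} → E^{k-1}_{*,s(e)}`,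
`f_e(α) = β` iff `σ(eα) = βg` for some edge `g`. -/
def FRel {k : ℕ} (hk : 1 ≤ k) (σ : Equiv.Perm (PathOfLen G k)) (e : G.E)
    (α β : G.Path) : Prop :=
  β.len = k - 1 ∧
    ∃ (hlen : α.len = k - 1) (hsrc : α.src = G.r e) (g : G.E) (hg : G.s g = β.rng),
      (σ ⟨Path.cons e α hsrc, len_cons_eq hk hlen hsrc⟩).val = Path.snoc β g hg

/-- The relational graph of the composition `f_{e₁} ∘ ⋯ ∘ f_{e_m}` (with `f_{e_m}`
applied first), for the list `[e₁, …, e_m]`. -/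
def FRelComp {k : ℕ} (hk : 1 ≤ k) (σ : Equiv.Perm (PathOfLen G k)) :
    List G.E → G.Path → G.Path → Prop
  | [], α, β => α = β
  | e :: t, α, β => ∃ γ, FRelComp hk σ t α γ ∧ FRel hk σ e γ β

/-- Condition (b): some length `m` such that every `m`-fold composition of
the maps `f_e` has empty domain, or full domain and singleton range. -/
def ConditionB {k : ℕ} (hk : 1 ≤ k) (σ : Equiv.Perm (PathOfLen G k)) : Prop :=
  ∃ m : ℕ, 1 ≤ m ∧ ∀ es : List G.E, es.length = m → ∀ elast, es.getLast? = some elast →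
    ((∀ α β, ¬ FRelComp hk σ es α β) ∨
      ((∀ α : G.Path, α.len = k - 1 → α.src = G.r elast → ∃ β, FRelComp hk σ es α β) ∧
        (∃ β₀, ∀ α β, FRelComp hk σ es α β → β = β₀)))

/-- The relational graph of the partial map `f_{e,g}` on pairs of distinct paths. -/
def FRel2 {k : ℕ} (hk : 1 ≤ k) (σ : Equiv.Perm (PathOfLen G k)) (e g : G.E)
    (p q : G.Path × G.Path) : Prop :=
  p.1 ≠ p.2 ∧ q.1 ≠ q.2 ∧
    ∃ (h1 : p.1.len = k - 1) (h2 : p.2.len = k - 1)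
      (hs1 : p.1.src = G.r e) (hs2 : p.2.src = G.r g)
      (h : G.E) (hg1 : G.s h = q.1.rng) (hg2 : G.s h = q.2.rng),
      (σ ⟨Path.cons e p.1 hs1, len_cons_eq hk h1 hs1⟩).val = Path.snoc q.1 h hg1 ∧
      (σ ⟨Path.cons g p.2 hs2, len_cons_eq hk h2 hs2⟩).val = Path.snoc q.2 h hg2

/-- The relational graph of the composition `f_{e₁,g₁} ∘ ⋯ ∘ f_{e_m,g_m}`. -/
def FRel2Comp {k : ℕ} (hk : 1 ≤ k) (σ : Equiv.Perm (PathOfLen G k)) :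
    List (G.E × G.E) → G.Path × G.Path → G.Path × G.Path → Prop
  | [], p, q => p = q
  | eg :: t, p, q => ∃ o, FRel2Comp hk σ t p o ∧ FRel2 hk σ eg.1 eg.2 o q

/-- Condition (d): some length `m` such that every `m`-fold composition of the
partial maps `f_{e,g}` has empty domain. -/
def ConditionD {k : ℕ} (hk : 1 ≤ k) (σ : Equiv.Perm (PathOfLen G k)) : Prop :=
  ∃ m : ℕ, 1 ≤ m ∧ ∀ L : List (G.E × G.E), L.length = m →
    ∀ p q, ¬ FRel2Comp hk σ L p q

variable (G)

/-- Pairs of paths of length `k-1` with a common source. -/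
def PairB (k : ℕ) :=
  {p : G.Path × G.Path // p.1.len = k - 1 ∧ p.2.len = k - 1 ∧ p.1.src = p.2.src}

/-- `Ψ`: pairs of distinct paths of length `k-1`. -/
def PairD (k : ℕ) :=
  {p : G.Path × G.Path // p.1.len = k - 1 ∧ p.2.len = k - 1 ∧ p.1 ≠ p.2}

end FinDirGraph


namespace FinDirGraph

variable {G : FinDirGraph}

lemma path_ext' {p q : G.Path} (h1 : p.src = q.src) (h2 : p.edges = q.edges) : p = q := by
  cases p; cases q; simp_all

lemma len_snoc (μ : G.Path) (g : G.E) (h : G.s g = μ.rng) :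
    (μ.snoc g h).len = μ.len + 1 := by
  simp [Path.snoc, Path.len]

section

variable {k : ℕ} {hk : 1 ≤ k} {σ : Equiv.Perm (PathOfLen G k)}

/-- The defining property of `PairD G k`. -/
def PProp (G : FinDirGraph) (k : ℕ) (q : G.Path × G.Path) : Prop :=
  q.1.len = k - 1 ∧ q.2.len = k - 1 ∧ q.1 ≠ q.2

lemma frel2_src {e g : G.E} {p q : G.Path × G.Path} (h : FRel2 hk σ e g p q) :
    PProp G k p := ⟨h.2.2.1, h.2.2.2.1, h.1⟩

lemma frel2_tgt {e g : G.E} {p q : G.Path × G.Path} (h : FRel2 hk σ e g p q) :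
    PProp G k q := by
  obtain ⟨hne, hqne, h1, h2, hs1, hs2, hh, hg1, hg2, heq1, heq2⟩ := h
  refine ⟨?_, ?_, hqne⟩
  · have hl : (σ ⟨Path.cons e p.1 hs1, len_cons_eq hk h1 hs1⟩).val.len = k :=
      (σ ⟨Path.cons e p.1 hs1, len_cons_eq hk h1 hs1⟩).property
    rw [heq1, len_snoc] at hl; omega
  · have hl : (σ ⟨Path.cons g p.2 hs2, len_cons_eq hk h2 hs2⟩).val.len = k :=
      (σ ⟨Path.cons g p.2 hs2, len_cons_eq hk h2 hs2⟩).property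
    rw [heq2, len_snoc] at hl; omega

lemma frel2comp_append (L1 L2 : List (G.E × G.E)) (p r : G.Path × G.Path) :
    FRel2Comp hk σ (L1 ++ L2) p r ↔
      ∃ q, FRel2Comp hk σ L2 p q ∧ FRel2Comp hk σ L1 q r := by
  induction L1 generalizing r with
  | nil =>
      constructor
      · intro h; exact ⟨r, h, rfl⟩
      · rintro ⟨q, h, rfl⟩; exact h
  | cons eg t ih =>
      constructor
      · rintro ⟨o, ho, hstep⟩
        obtain ⟨q, hq, ho'⟩ := (ih o).mp ho
        exact ⟨q, hq, o, ho', hstep⟩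
      · rintro ⟨q, hq, o, ho, hstep⟩
        exact ⟨o, (ih o).mpr ⟨q, hq, ho⟩, hstep⟩

/-- From a cycle, chains of arbitrary length. -/
lemma cycle_pump {L : List (G.E × G.E)} {p : G.Path × G.Path}
    (hL : L ≠ []) (hc : FRel2Comp hk σ L p p) (n : ℕ) :
    ∃ L', n ≤ L'.length ∧ FRel2Comp hk σ L' p p := by
  induction n with
  | zero => exact ⟨[], Nat.zero_le _, rfl⟩
  | succ n ih =>
      obtain ⟨L', hlen, hcomp⟩ := ih
      refine ⟨L ++ L', ?_, (frel2comp_append L L' p p).mpr ⟨p, hcomp, hc⟩⟩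
      have : 1 ≤ L.length := List.length_pos_iff.mpr hL
      simp only [List.length_append]; omega

/-- Under Condition (d) there are no cycles. -/
lemma no_cycle (hd : ConditionD hk σ) {L : List (G.E × G.E)} {p : G.Path × G.Path}
    (hL : L ≠ []) : ¬ FRel2Comp hk σ L p p := by
  intro hc
  obtain ⟨m, hm1, hm⟩ := hd
  obtain ⟨L', hlen, hcomp⟩ := cycle_pump hL hc m
  have hsplit : L' = L'.take m ++ L'.drop m := (List.take_append_drop m L').symm
  rw [hsplit] at hcomp
  obtain ⟨q, _, hq2⟩ := (frel2comp_append _ _ _ _).mp hcomp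
  exact hm (L'.take m) (by rw [List.length_take]; omega) q p hq2

lemma first_step {L : List (G.E × G.E)} {p q : G.Path × G.Path}
    (h : FRel2Comp hk σ L p q) (hL : L ≠ []) :
    ∃ (e g : G.E) (o : G.Path × G.Path), FRel2 hk σ e g p o := by
  induction L generalizing q with
  | nil => exact absurd rfl hL
  | cons eg t ih =>
      obtain ⟨o, ho, hstep⟩ := h
      rcases eq_or_ne t [] with rfl | ht
      · cases ho; exact ⟨eg.1, eg.2, q, hstep⟩
      · exact ih ho ht

instance : Finite (PairD G k) := by
  let f : PairD G k →
      (G.V × List.Vector G.E (k - 1)) × (G.V × List.Vector G.E (k - 1)) :=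
    fun p => ((p.val.1.src, ⟨p.val.1.edges, p.prop.1⟩),
              (p.val.2.src, ⟨p.val.2.edges, p.prop.2.1⟩))
  have hf : Function.Injective f := by
    rintro ⟨⟨a1, a2⟩, _⟩ ⟨⟨b1, b2⟩, _⟩ h
    simp only [f, Prod.mk.injEq, List.Vector] at h
    obtain ⟨⟨h1, h2⟩, h3, h4⟩ := h
    have h2' : a1.edges = b1.edges := congrArg Subtype.val h2
    have h4' : a2.edges = b2.edges := congrArg Subtype.val h4
    exact Subtype.ext (Prod.ext (path_ext' h1 h2') (path_ext' h3 h4'))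
  exact Finite.of_injective f hf

/-- Chain extraction: a composition of `m` steps yields a strictly decreasing
chain of `m + 1` elements of `PairD G k`. -/
lemma chain_of_comp (le : PairD G k → PairD G k → Prop)
    (hstep : ∀ (e g : G.E) (P Q : PairD G k),
      FRel2 hk σ e g P.val Q.val → le Q P ∧ Q ≠ P) :
    ∀ (L : List (G.E × G.E)) (p q : G.Path × G.Path), FRel2Comp hk σ L p q → L ≠ [] →
      ∃ (c : List (PairD G k)) (hq : PProp G k q),
        c.head? = some ⟨q, hq⟩ ∧ c.length = L.length + 1 ∧
        List.Chain' (fun a b => le a b ∧ a ≠ b) c := by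
  intro L
  induction L with
  | nil => intro _ _ _ hL; exact absurd rfl hL
  | cons eg t ih =>
      intro p q h _
      obtain ⟨o, ho, hstep'⟩ := h
      have hqP : PProp G k q := frel2_tgt hstep'
      have hoP : PProp G k o := frel2_src hstep'
      have hlt := hstep eg.1 eg.2 ⟨o, hoP⟩ ⟨q, hqP⟩ hstep'
      rcases eq_or_ne t [] with rfl | ht
      · cases ho
        refine ⟨[⟨q, hqP⟩, ⟨p, hoP⟩], hqP, rfl, rfl, ?_⟩
        exact List.isChain_cons_cons.mpr ⟨hlt, List.isChain_singleton _⟩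
      · obtain ⟨c, hoP', hhead, hlen, hchain⟩ := ih p o ho ht
        refine ⟨⟨q, hqP⟩ :: c, hqP, rfl, by show c.length + 1 = t.length + 1 + 1; omega, ?_⟩
        refine List.isChain_cons.mpr ⟨?_, hchain⟩
        intro y hy
        rw [hhead, Option.mem_def] at hy; replace hy := Option.some.inj hy
        subst hy
        exact hstep eg.1 eg.2 ⟨o, hoP'⟩ ⟨q, hqP⟩ hstep'

end
end FinDirGraph


open FinDirGraph in
/-- Lemma 6.2 (conditiond). -/
theorem stmt_17 (G : FinDirGraph) (hns : G.NoSinks) (hle : G.EveryLoopHasExit)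
    (k : ℕ) (hk : 1 ≤ k) (σ : Equiv.Perm (PathOfLen G k))
    (hσs : ∀ μ, (σ μ).val.src = μ.val.src) (hσr : ∀ μ, (σ μ).val.rng = μ.val.rng) :
    ConditionD hk σ ↔
      ∃ le : PairD G k → PairD G k → Prop, IsPartialOrder (PairD G k) le ∧
        -- minimal elements are exactly the elements of Ψ \ Δ
        (∀ p : PairD G k, (∀ q, le q p → q = p) ↔
          ¬∃ (e g : G.E) (q : G.Path × G.Path), FRel2 hk σ e g p.val q) ∧
        -- f_{e,g}(α, β) < (α, β) on the domain of f_{e,g}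
        (∀ (e g : G.E) (p q : PairD G k),
          FRel2 hk σ e g p.val q.val → le q p ∧ q ≠ p) := by
  constructor
  · intro hd
    refine ⟨fun q p => ∃ L, FRel2Comp hk σ L p.val q.val, ?_, ?_, ?_⟩
    · refine { refl := fun a => ⟨[], rfl⟩,
               trans := fun a b c ⟨L1, h1⟩ ⟨L2, h2⟩ =>
                 ⟨L1 ++ L2, (frel2comp_append L1 L2 _ _).mpr ⟨b.val, h2, h1⟩⟩,
               antisymm := ?_ }
      rintro a b ⟨L1, h1⟩ ⟨L2, h2⟩
      -- h1 : comp L1 b.val a.val, h2 : comp L2 a.val b.val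
      rcases eq_or_ne L1 [] with rfl | hL1
      · exact Subtype.ext h1.symm
      · exfalso
        have hc : FRel2Comp hk σ (L1 ++ L2) a.val a.val :=
          (frel2comp_append L1 L2 _ _).mpr ⟨b.val, h2, h1⟩
        exact no_cycle hd (by simp [hL1]) hc
    · intro p
      constructor
      · rintro hmin ⟨e, g, q, hfr⟩
        have hq := frel2_tgt hfr
        have hle : ∃ L, FRel2Comp hk σ L p.val (⟨q, hq⟩ : PairD G k).val :=
          ⟨[(e, g)], p.val, rfl, hfr⟩
        have heq := hmin ⟨q, hq⟩ hle
        have hq' : q = p.val := congrArg Subtype.val heq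
        subst hq'
        exact no_cycle hd (L := [(e, g)]) (by simp) ⟨p.val, rfl, hfr⟩
      · rintro hnone q ⟨L, hL⟩
        cases L with
        | nil => exact Subtype.ext hL.symm
        | cons eg t =>
            obtain ⟨e, g, o, ho⟩ := first_step hL (by simp)
            exact absurd ⟨e, g, o, ho⟩ hnone
    · intro e g p q hfr
      refine ⟨⟨[(e, g)], p.val, rfl, hfr⟩, ?_⟩
      intro heq
      have hv : q.val = p.val := congrArg Subtype.val heq
      rw [hv] at hfr
      exact no_cycle hd (L := [(e, g)]) (by simp) ⟨p.val, rfl, hfr⟩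
  · rintro ⟨le, hpo, hmin, hstep⟩
    haveI : Fintype (PairD G k) := Fintype.ofFinite _
    refine ⟨Fintype.card (PairD G k) + 1, by omega, ?_⟩
    intro L hlen p q hcomp
    have hL : L ≠ [] := by
      intro h; subst h; simp at hlen
    obtain ⟨c, hq, hhead, hclen, hchain⟩ :=
      chain_of_comp le (fun e g P Q h => hstep e g P Q h) L p q hcomp hL
    haveI : IsTrans (PairD G k) (fun a b => le a b ∧ a ≠ b) := by
      constructor
      rintro a b c ⟨h1, hne1⟩ ⟨h2, hne2⟩
      refine ⟨hpo.toIsPreorder.toIsTrans.trans a b c h1 h2, ?_⟩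
      rintro rfl
      exact hne1 (hpo.toAntisymm.antisymm a b h1 h2)
    have hpair := List.isChain_iff_pairwise.mp hchain
    have hnd : c.Nodup := hpair.imp (fun h => h.2)
    have := hnd.length_le_card
    omega
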